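/- The quantity (2β₃β₄γ + β₃²(4β₃β₅ - 5β₄²))/γ² is invariant under the dimension-6 adapted transformations on U₁ = {β₃ ≠ 0, γ ≠ 0}: if β₃' = (D/A²)β₃, β₄' = (D/A³)(β₄ - 2(B/A)β₃²), β₅' = (D/A⁴)(β₅ + (B/A)(γ - 5β₄β₃ + ... )) and γ' = (D²/A⁵)γ satisfy the stated transformation laws of SLeib₆, then (2β₃'β₄'γ' + β₃'²Λ₁')/γ'² = (2β₃β₄γ + β₃²Λ₁)/γ², where Λ₁ = 4β₃β₅ - 5β₄². -/

import Mathlib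

/-- `(2β₃β₄γ + β₃²Λ₁)/γ²` with `Λ₁ = 4β₃β₅ - 5β₄²` is invariant under the
adapted transformations of `SLeib₆` on `U₁ = {β₃ ≠ 0, γ ≠ 0}`. -/
theorem U1_invariant_SLeib6 (A B D b3 b4 b5 g b3' b4' b5' g' : ℂ)
    (hAD : A * D ≠ 0) (hb3 : b3 ≠ 0) (hg : g ≠ 0)
    (h3 : b3' = D / A ^ 2 * b3)
    (h4 : b4' = D / A ^ 3 * (b4 - 2 * (B / A) * b3 ^ 2))
    (h5 : b5' = D / A ^ 4 *
      (B / A * g + b5 - 5 * (B / A) * b3 * b4 + 5 * (B / A) ^ 2 * b3 ^ 3))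
    (h6 : g' = D ^ 2 / A ^ 5 * g) :
    (2 * b3' * b4' * g' + b3' ^ 2 * (4 * b3' * b5' - 5 * b4' ^ 2)) / g' ^ 2 =
      (2 * b3 * b4 * g + b3 ^ 2 * (4 * b3 * b5 - 5 * b4 ^ 2)) / g ^ 2 := by
  have hA : A ≠ 0 := fun h => hAD (by simp [h])
  have hD : D ≠ 0 := fun h => hAD (by simp [h])
  have hg' : g' ≠ 0 := by
    rw [h6]; exact mul_ne_zero (div_ne_zero (pow_ne_zero _ hD) (pow_ne_zero _ hA)) hg
  rw [div_eq_div_iff (pow_ne_zero 2 hg') (pow_ne_zero 2 hg)]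
  subst h3 h4 h5 h6
  field_simp [hA, hD]
  ring_nf
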